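/- Consider the stochastic discrete-time system with measurable safe set X ⊆ ℝⁿ and horizon N ∈ ℕ, and let X̃ ⊆ ℝⁿ be a measurable set containing X and all one-step reachable states from X. Suppose v : ℝⁿ → ℝ is measurable, the map θ ↦ v(f(x,θ)) is P-integrable for every x ∈ X, and there are constants M ∈ ℝ and β > 0 such that: (i) v(x) ≤ M for all x ∈ X̃; (ii) β + v(x) ≤ ∫_Θ v(f(x,θ)) dP(θ) for all x ∈ X; (iii) v(x) ≤ 1 for all x ∈ X̃ ∖ X. Then for every x₀ ∈ X, the finite-time safety probability satisfies P^∞({π : φ_π^{x₀}(k) ∈ X for all k ∈ {0,1,…,N}}) ≤ (M − v(x₀)) / (β(N+1)). -/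

import Mathlib

open MeasureTheory ProbabilityTheory
open scoped ENNReal

/-- Trajectory of the stochastic discrete-time system `x(l+1) = f(x(l), θ(l))`. -/
def traj {n : ℕ} {Θ : Type*} (f : (Fin n → ℝ) → Θ → (Fin n → ℝ))
    (x₀ : Fin n → ℝ) (π : ℕ → Θ) : ℕ → (Fin n → ℝ)
  | 0 => x₀
  | k + 1 => f (traj f x₀ π k) (π k)

/-- Barrier-like condition with a bounded auxiliary function (Theorem 2 of
Xue et al. 2024, case `α = 1`): upper bound on the finite-time safety probability. -/
theorem finite_time_safety_upper_bound_bounded_fn_martingale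
    {n : ℕ} {Θ : Type*} [MeasurableSpace Θ]
    (P : Measure Θ) [IsProbabilityMeasure P]
    -- `Pinf` is the i.i.d. product measure `P^∞` on disturbance signals:
    (Pinf : Measure (ℕ → Θ)) [IsProbabilityMeasure Pinf]
    (h_indep : iIndepFun (m := fun _ : ℕ => ‹MeasurableSpace Θ›) (fun i (π : ℕ → Θ) => π i) Pinf)
    (h_law : ∀ i : ℕ, Pinf.map (fun π : ℕ → Θ => π i) = P)
    (f : (Fin n → ℝ) → Θ → (Fin n → ℝ))
    (hf : Measurable (fun p : (Fin n → ℝ) × Θ => f p.1 p.2))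
    (X Xt : Set (Fin n → ℝ)) (hX : MeasurableSet X) (hXt : MeasurableSet Xt)
    (hXsub : X ⊆ Xt)
    (hreach : ∀ x ∈ X, ∀ θ : Θ, f x θ ∈ Xt)
    (N : ℕ)
    (v : (Fin n → ℝ) → ℝ) (hv : Measurable v)
    (hint : ∀ x ∈ X, Integrable (fun θ => v (f x θ)) P)
    (M β : ℝ) (hβ : 0 < β)
    (h1 : ∀ x ∈ Xt, v x ≤ M)
    (h2 : ∀ x ∈ X, β + v x ≤ ∫ θ, v (f x θ) ∂P)
    (h3 : ∀ x ∈ Xt \ X, v x ≤ 1)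
    (x₀ : Fin n → ℝ) (hx₀ : x₀ ∈ X) :
    (Pinf {π : ℕ → Θ | ∀ k ≤ N, traj f x₀ π k ∈ X}).toReal
      ≤ (M - v x₀) / (β * (N + 1)) := by
  classical
  -- Θ is nonempty
  have hne : Nonempty Θ := by
    by_contra h
    rw [not_nonempty_iff] at h
    have h1' : P (Set.univ : Set Θ) = 1 := measure_univ
    rw [Set.univ_eq_empty_iff.mpr h, measure_empty] at h1'
    exact zero_ne_one h1'
  obtain ⟨d⟩ := hne
  -- the auxiliary nonnegative function
  set G : (Fin n → ℝ) → ℝ≥0∞ := fun x => ENNReal.ofReal (M - v x) with hGdef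
  have hGmeas : Measurable G := (measurable_const.sub hv).ennreal_ofReal
  -- trajectory measurability
  have htraj_meas : ∀ k, Measurable (fun π : ℕ → Θ => traj f x₀ π k) := by
    intro k
    induction k with
    | zero => exact measurable_const
    | succ k ih =>
      have : (fun π : ℕ → Θ => traj f x₀ π (k + 1))
          = fun π : ℕ → Θ => f (traj f x₀ π k) (π k) := rfl
      rw [this]
      exact hf.comp (ih.prodMk (measurable_pi_apply k))
  -- trajectory only depends on an initial segment of the disturbance
  have htraj_congr : ∀ (k : ℕ) (π π' : ℕ → Θ), (∀ i, i < k → π i = π' i) →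
      traj f x₀ π k = traj f x₀ π' k := by
    intro k
    induction k with
    | zero => intro _ _ _; rfl
    | succ k ih =>
      intro π π' h
      show f (traj f x₀ π k) (π k) = f (traj f x₀ π' k) (π' k)
      rw [ih π π' (fun i hi => h i (hi.trans (Nat.lt_succ_self k))),
        h k (Nat.lt_succ_self k)]
  -- the safe cylinder sets
  set S : ℕ → Set (ℕ → Θ) := fun k => {π | ∀ j, j < k → traj f x₀ π j ∈ X} with hSdef
  have hSmeas : ∀ k, MeasurableSet (S k) := by
    intro k
    have : S k = ⋂ (j : ℕ), ⋂ (_ : j < k), (fun π => traj f x₀ π j) ⁻¹' X := by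
      ext π; simp [hSdef]
    rw [this]
    exact MeasurableSet.iInter fun j => MeasurableSet.iInter fun _ => (htraj_meas j) hX
  have hS_anti : ∀ {a b : ℕ}, a ≤ b → S b ⊆ S a :=
    fun hab π hπ j hj => hπ j (lt_of_lt_of_le hj hab)
  -- bound β + v x ≤ M on X
  have hβM : ∀ x ∈ X, β + v x ≤ M := by
    intro x hx
    refine (h2 x hx).trans ?_
    calc ∫ θ, v (f x θ) ∂P ≤ ∫ θ, M ∂P :=
          integral_mono (hint x hx) (integrable_const M)
            (fun θ => h1 _ (hreach x hx θ))
      _ = M := by simp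
  -- supermartingale inequality for G
  have hkey : ∀ x ∈ X, (∫⁻ θ, G (f x θ) ∂P) + ENNReal.ofReal β ≤ G x := by
    intro x hx
    have hint' : Integrable (fun θ => M - v (f x θ)) P := (integrable_const M).sub (hint x hx)
    have hnn : ∀ θ, 0 ≤ M - v (f x θ) := fun θ => sub_nonneg.mpr (h1 _ (hreach x hx θ))
    have hIle : ∫ θ, v (f x θ) ∂P ≤ M := by
      calc ∫ θ, v (f x θ) ∂P ≤ ∫ θ, M ∂P :=
            integral_mono (hint x hx) (integrable_const M)
              (fun θ => h1 _ (hreach x hx θ))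
        _ = M := by simp
    have heq : ∫⁻ θ, G (f x θ) ∂P = ENNReal.ofReal (∫ θ, (M - v (f x θ)) ∂P) :=
      (ofReal_integral_eq_lintegral_ofReal hint' (Filter.Eventually.of_forall hnn)).symm
    have heq2 : ∫ θ, (M - v (f x θ)) ∂P = M - ∫ θ, v (f x θ) ∂P := by
      rw [integral_sub (integrable_const M) (hint x hx)]; simp
    rw [heq, heq2]
    calc ENNReal.ofReal (M - ∫ θ, v (f x θ) ∂P) + ENNReal.ofReal β
        = ENNReal.ofReal (M - ∫ θ, v (f x θ) ∂P + β) :=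
          (ENNReal.ofReal_add (by linarith) hβ.le).symm
      _ ≤ ENNReal.ofReal (M - v x) := ENNReal.ofReal_le_ofReal (by linarith [h2 x hx])
  -- the independence / Fubini step
  have hfub : ∀ (k : ℕ) (H : ((Fin k → Θ) × Θ) → ℝ≥0∞), Measurable H →
      ∫⁻ π, H (fun i : Fin k => π i.1, π k) ∂Pinf
        = ∫⁻ π, ∫⁻ θ, H (fun i : Fin k => π i.1, θ) ∂P ∂Pinf := by
    intro k H hH
    set Y : (ℕ → Θ) → (Fin k → Θ) := fun π i => π i.1 with hYdef
    have hYmeas : Measurable Y := measurable_pi_lambda _ fun i => measurable_pi_apply i.1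
    set Z : (ℕ → Θ) → Θ := fun π => π k with hZdef
    have hZmeas : Measurable Z := measurable_pi_apply k
    have hind : IndepFun Y Z Pinf := by
      have h' := h_indep.indepFun_finset (Finset.range k) {k}
        (by simp [Finset.disjoint_left]; omega) (fun i => measurable_pi_apply i)
      have hφ : Measurable (fun (g : { i // i ∈ Finset.range k } → Θ) =>
          fun i : Fin k => g ⟨i.1, Finset.mem_range.mpr i.2⟩) :=
        measurable_pi_lambda _ fun i => measurable_pi_apply _
      have hψ : Measurable (fun (g : { i // i ∈ ({k} : Finset ℕ) } → Θ) =>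
          g ⟨k, Finset.mem_singleton_self k⟩) := measurable_pi_apply _
      exact h'.comp hφ hψ
    haveI : IsProbabilityMeasure (Pinf.map Y) := Measure.isProbabilityMeasure_map hYmeas.aemeasurable
    have hjoint : Pinf.map (fun π => (Y π, Z π)) = (Pinf.map Y).prod P := by
      rw [← h_law k]
      exact (indepFun_iff_map_prod_eq_prod_map_map hYmeas.aemeasurable hZmeas.aemeasurable).mp hind
    have hinner : Measurable fun y : Fin k → Θ => ∫⁻ θ, H (y, θ) ∂P :=
      Measurable.lintegral_prod_right hH
    calc ∫⁻ π, H (Y π, Z π) ∂Pinf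
        = ∫⁻ q, H q ∂(Pinf.map (fun π => (Y π, Z π))) :=
          (lintegral_map hH (hYmeas.prodMk hZmeas)).symm
      _ = ∫⁻ q, H q ∂((Pinf.map Y).prod P) := by rw [hjoint]
      _ = ∫⁻ y, ∫⁻ θ, H (y, θ) ∂P ∂(Pinf.map Y) := lintegral_prod _ hH.aemeasurable
      _ = ∫⁻ π, ∫⁻ θ, H (Y π, θ) ∂P ∂Pinf := lintegral_map hinner hYmeas
  -- extension of a finite disturbance prefix
  have hext_meas : ∀ k : ℕ, Measurable
      (fun (y : Fin k → Θ) => (fun i : ℕ => if h : i < k then y ⟨i, h⟩ else d)) := by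
    intro k
    apply measurable_pi_lambda
    intro i
    by_cases h : i < k
    · simpa [h] using measurable_pi_apply (⟨i, h⟩ : Fin k)
    · simpa [h] using (measurable_const : Measurable fun _ : Fin k → Θ => d)
  -- measurability of x ↦ ∫⁻ θ, G (f x θ) dP
  have hW : Measurable fun x : Fin n → ℝ => ∫⁻ θ, G (f x θ) ∂P :=
    Measurable.lintegral_prod_right (hGmeas.comp hf)
  -- key identity: conditioning out the k-th disturbance
  have hcond : ∀ k : ℕ,
      ∫⁻ π in S (k+1), G (traj f x₀ π (k+1)) ∂Pinf
        = ∫⁻ π in S (k+1), (∫⁻ θ, G (f (traj f x₀ π k) θ) ∂P) ∂Pinf := by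
    intro k
    set ext : (Fin k → Θ) → (ℕ → Θ) :=
      fun y i => if h : i < k then y ⟨i, h⟩ else d with hextdef
    have hext_agree : ∀ (π : ℕ → Θ) (j : ℕ), j ≤ k →
        traj f x₀ (ext (fun i : Fin k => π i.1)) j = traj f x₀ π j := by
      intro π j hj
      apply htraj_congr
      intro i hi
      have : i < k := lt_of_lt_of_le hi hj
      simp [hextdef, this]
    set A : Set (Fin k → Θ) := {y | ∀ j, j < k + 1 → traj f x₀ (ext y) j ∈ X} with hAdef
    have hAmeas : MeasurableSet A := by
      have : A = ⋂ (j : ℕ), ⋂ (_ : j < k + 1), (fun y => traj f x₀ (ext y) j) ⁻¹' X := by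
        ext y; simp [hAdef]
      rw [this]
      exact MeasurableSet.iInter fun j => MeasurableSet.iInter fun _ =>
        ((htraj_meas j).comp (hext_meas k)) hX
    have hmemA : ∀ π : ℕ → Θ, ((fun i : Fin k => π i.1) ∈ A ↔ π ∈ S (k+1)) := by
      intro π
      constructor
      · intro h j hj
        have := h j hj
        rwa [hext_agree π j (Nat.lt_succ_iff.mp hj)] at this
      · intro h j hj
        have := h j hj
        rwa [hext_agree π j (Nat.lt_succ_iff.mp hj)]
    set H : ((Fin k → Θ) × Θ) → ℝ≥0∞ :=
      fun q => A.indicator (fun _ => (1 : ℝ≥0∞)) q.1 * G (f (traj f x₀ (ext q.1) k) q.2)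
      with hHdef
    have hHmeas : Measurable H := by
      apply Measurable.mul
      · exact (measurable_one.indicator hAmeas).comp measurable_fst
      · exact hGmeas.comp (hf.comp
          (((htraj_meas k).comp ((hext_meas k).comp measurable_fst)).prodMk measurable_snd))
    have h1' : ∀ π : ℕ → Θ, H (fun i : Fin k => π i.1, π k)
        = (S (k+1)).indicator (fun π' => G (traj f x₀ π' (k+1))) π := by
      intro π
      by_cases hπ : π ∈ S (k+1)
      · have hA : (fun i : Fin k => π i.1) ∈ A := (hmemA π).mpr hπ
        have : traj f x₀ π (k+1) = f (traj f x₀ π k) (π k) := rfl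
        simp [hHdef, Set.indicator_of_mem hA, Set.indicator_of_mem hπ, this,
          hext_agree π k le_rfl]
      · have hA : (fun i : Fin k => π i.1) ∉ A := fun h => hπ ((hmemA π).mp h)
        simp [hHdef, Set.indicator_of_notMem hA, Set.indicator_of_notMem hπ]
    have h2' : ∀ π : ℕ → Θ, (∫⁻ θ, H (fun i : Fin k => π i.1, θ) ∂P)
        = (S (k+1)).indicator (fun π' => ∫⁻ θ, G (f (traj f x₀ π' k) θ) ∂P) π := by
      intro π
      by_cases hπ : π ∈ S (k+1)
      · have hA : (fun i : Fin k => π i.1) ∈ A := (hmemA π).mpr hπ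
        simp [hHdef, Set.indicator_of_mem hA, Set.indicator_of_mem hπ,
          hext_agree π k le_rfl]
      · have hA : (fun i : Fin k => π i.1) ∉ A := fun h => hπ ((hmemA π).mp h)
        simp [hHdef, Set.indicator_of_notMem hA, Set.indicator_of_notMem hπ]
    calc ∫⁻ π in S (k+1), G (traj f x₀ π (k+1)) ∂Pinf
        = ∫⁻ π, (S (k+1)).indicator (fun π' => G (traj f x₀ π' (k+1))) π ∂Pinf :=
          (lintegral_indicator (hSmeas (k+1)) _).symm
      _ = ∫⁻ π, H (fun i : Fin k => π i.1, π k) ∂Pinf := by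
          apply lintegral_congr; intro π; rw [h1' π]
      _ = ∫⁻ π, ∫⁻ θ, H (fun i : Fin k => π i.1, θ) ∂P ∂Pinf := hfub k H hHmeas
      _ = ∫⁻ π, (S (k+1)).indicator (fun π' => ∫⁻ θ, G (f (traj f x₀ π' k) θ) ∂P) π ∂Pinf := by
          apply lintegral_congr; intro π; rw [h2' π]
      _ = ∫⁻ π in S (k+1), (∫⁻ θ, G (f (traj f x₀ π k) θ) ∂P) ∂Pinf :=
          lintegral_indicator (hSmeas (k+1)) _
  -- the main induction
  have main : ∀ k, k ≤ N + 1 →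
      (k : ℝ≥0∞) * ENNReal.ofReal β * Pinf (S (N+1))
        + ∫⁻ π in S k, G (traj f x₀ π k) ∂Pinf ≤ G x₀ := by
    intro k
    induction k with
    | zero =>
      intro _
      have hS0 : S 0 = Set.univ := by ext π; simp [hSdef]
      simp [hS0, traj]
    | succ k ih =>
      intro hk
      have hk' : k ≤ N + 1 := Nat.le_of_succ_le hk
      have ihk := ih hk'
      -- step 2 : pointwise supermartingale bound
      have hstep2 : (∫⁻ π in S (k+1), (∫⁻ θ, G (f (traj f x₀ π k) θ) ∂P) ∂Pinf)
          + ENNReal.ofReal β * Pinf (S (k+1))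
          ≤ ∫⁻ π in S (k+1), G (traj f x₀ π k) ∂Pinf := by
        have hconst : ENNReal.ofReal β * Pinf (S (k+1))
            = ∫⁻ _ in S (k+1), ENNReal.ofReal β ∂Pinf := by
          rw [setLIntegral_const]
        rw [hconst, ← lintegral_add_right _ measurable_const]
        apply setLIntegral_mono (hGmeas.comp (htraj_meas k))
        intro π hπ
        exact hkey (traj f x₀ π k) (hπ k (Nat.lt_succ_self k))
      have hstep3 : ∫⁻ π in S (k+1), G (traj f x₀ π k) ∂Pinf
          ≤ ∫⁻ π in S k, G (traj f x₀ π k) ∂Pinf :=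
        lintegral_mono_set (hS_anti (Nat.le_succ k))
      have hpmono : Pinf (S (N+1)) ≤ Pinf (S (k+1)) := measure_mono (hS_anti hk)
      have hcast : ((k + 1 : ℕ) : ℝ≥0∞) = (k : ℝ≥0∞) + 1 := by push_cast; ring
      calc ((k + 1 : ℕ) : ℝ≥0∞) * ENNReal.ofReal β * Pinf (S (N+1))
            + ∫⁻ π in S (k+1), G (traj f x₀ π (k+1)) ∂Pinf
          = (k : ℝ≥0∞) * ENNReal.ofReal β * Pinf (S (N+1))
            + ((∫⁻ π in S (k+1), (∫⁻ θ, G (f (traj f x₀ π k) θ) ∂P) ∂Pinf)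
              + ENNReal.ofReal β * Pinf (S (N+1))) := by
            rw [hcond k, hcast]; ring
        _ ≤ (k : ℝ≥0∞) * ENNReal.ofReal β * Pinf (S (N+1))
            + ((∫⁻ π in S (k+1), (∫⁻ θ, G (f (traj f x₀ π k) θ) ∂P) ∂Pinf)
              + ENNReal.ofReal β * Pinf (S (k+1))) := by
            gcongr
        _ ≤ (k : ℝ≥0∞) * ENNReal.ofReal β * Pinf (S (N+1))
            + ∫⁻ π in S (k+1), G (traj f x₀ π k) ∂Pinf := by gcongr
        _ ≤ (k : ℝ≥0∞) * ENNReal.ofReal β * Pinf (S (N+1))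
            + ∫⁻ π in S k, G (traj f x₀ π k) ∂Pinf := by gcongr
        _ ≤ G x₀ := ihk
  -- conclude
  have hfinal : ((N + 1 : ℕ) : ℝ≥0∞) * ENNReal.ofReal β * Pinf (S (N+1))
      ≤ ENNReal.ofReal (M - v x₀) :=
    le_trans (self_le_add_right _ _) (main (N+1) le_rfl)
  have hset : {π : ℕ → Θ | ∀ k ≤ N, traj f x₀ π k ∈ X} = S (N+1) := by
    ext π; simp [hSdef, Nat.lt_succ_iff]
  rw [hset]
  have hd : (0:ℝ) < β * (N + 1) := by positivity
  rw [le_div_iff₀ hd]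
  have htoReal := ENNReal.toReal_mono (by simp) hfinal
  rw [ENNReal.toReal_mul, ENNReal.toReal_mul, ENNReal.toReal_natCast,
    ENNReal.toReal_ofReal hβ.le, ENNReal.toReal_ofReal (by linarith [hβM x₀ hx₀])] at htoReal
  push_cast at htoReal
  nlinarith [ENNReal.toReal_nonneg (a := Pinf (S (N+1)))]
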